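/- Let A ∈ Ẽ_0^s. Then A is an L₂-matrix: for every nonzero x ≥ 0 with Ax ≥ 0 and xᵀAx = 0, there exist nonnegative diagonal matrices D₁ and D₂ such that D₂x ≠ 0 and (D₁A + AᵀD₂)x = 0. (Take D₂ = I and (D₁)_{ii} = −(Aᵀx)_i/(Ax)_i when (Ax)_i ≠ 0, and 0 otherwise.) -/

import Mathlib

/-- A is semimonotone (E₀). -/
def IsSemimonotone {n : ℕ} (A : Matrix (Fin n) (Fin n) ℝ) : Prop :=
  ∀ x : Fin n → ℝ, 0 ≤ x → x ≠ 0 → ∃ i, 0 < x i ∧ 0 ≤ A.mulVec x i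

/-- A is semimonotone star (E₀ˢ). -/
def IsSemimonotoneStar {n : ℕ} (A : Matrix (Fin n) (Fin n) ℝ) : Prop :=
  IsSemimonotone A ∧
    ∀ x : Fin n → ℝ, 0 ≤ x → 0 ≤ A.mulVec x → dotProduct x (A.mulVec x) = 0 →
      A.transpose.mulVec x ≤ 0

/-- A is an Ẽ₀ˢ-matrix. -/
def IsE0sTilde {n : ℕ} (A : Matrix (Fin n) (Fin n) ℝ) : Prop :=
  IsSemimonotoneStar A ∧
    ∀ x : Fin n → ℝ, 0 ≤ x → 0 ≤ A.mulVec x → dotProduct x (A.mulVec x) = 0 →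
      ∀ i, A.transpose.mulVec x i ≠ 0 → A.mulVec x i ≠ 0

theorem stmt14 {n : ℕ} (A : Matrix (Fin n) (Fin n) ℝ) (hA : IsE0sTilde A) :
    ∀ x : Fin n → ℝ, 0 ≤ x → x ≠ 0 → 0 ≤ A.mulVec x →
      dotProduct x (A.mulVec x) = 0 →
      ∃ D₁ D₂ : Matrix (Fin n) (Fin n) ℝ, D₁.IsDiag ∧ D₂.IsDiag ∧
        (∀ i, 0 ≤ D₁ i i) ∧ (∀ i, 0 ≤ D₂ i i) ∧ D₂.mulVec x ≠ 0 ∧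
        (D₁ * A + A.transpose * D₂).mulVec x = 0 := by
  intro x hx hx0 hAx hdot
  obtain ⟨⟨_, hstar⟩, htilde⟩ := hA
  have hAt := hstar x hx hAx hdot
  set d : Fin n → ℝ := fun i => if A.mulVec x i = 0 then 0 else
    -(A.transpose.mulVec x i) / (A.mulVec x i) with hd
  refine ⟨Matrix.diagonal d, 1, Matrix.isDiag_diagonal d, Matrix.isDiag_one, ?_, ?_, ?_, ?_⟩
  · intro i
    simp only [Matrix.diagonal_apply_eq, hd]
    split_ifs with h
    · exact le_rfl
    · exact div_nonneg (neg_nonneg.2 (hAt i)) (lt_of_le_of_ne (hAx i) (Ne.symm h)).le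
  · intro i; simp [Matrix.one_apply]
  · simpa using hx0
  · funext i
    have key : d i * A.mulVec x i + A.transpose.mulVec x i = 0 := by
      simp only [hd]
      split_ifs with h
      · have : A.transpose.mulVec x i = 0 := by
          by_contra hne
          exact (htilde x hx hAx hdot i hne) h
        simp [h, this]
      · field_simp
        ring
    calc (Matrix.diagonal d * A + A.transpose * 1).mulVec x i
        = (Matrix.diagonal d * A).mulVec x i + (A.transpose * 1).mulVec x i := by
          rw [Matrix.add_mulVec]; rfl
      _ = d i * A.mulVec x i + A.transpose.mulVec x i := by
          rw [← Matrix.mulVec_mulVec, ← Matrix.mulVec_mulVec, Matrix.mulVec_diagonal, Matrix.one_mulVec]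
      _ = 0 := key
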